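/- arXiv:1610.03126 — 8 statements merged into one kernel-verified Lean document; each statement's English description precedes it below -/
import Mathlib

section
/- Let G be a group, g ∈ G, and let E(g) be the minimal Engel sink of g (assumed to exist and be finite). Then for every x ∈ E(g) there exists y ∈ E(g) such that x = [y, g]. -/
open scoped commutatorElement

/-- The iterated Engel commutator `[x, n a]`. -/
def engel {G : Type*} [Group G] (a x : G) : ℕ → G
  | 0 => x
  | n + 1 => ⁅engel a x n, a⁆

/-- A finite set `S` is a sink-candidate for `a`. -/
def IsSink {G : Type*} [Group G] (a : G) (S : Set G) : Prop :=
  S.Finite ∧ ∀ x : G, ∃ N : ℕ, ∀ n ≥ N, engel a x n ∈ S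

theorem stmt_1 {G : Type*} [Group G] (a : G) (E : Set G)
    (hE : IsSink a E) (hmin : ∀ T : Set G, IsSink a T → E ⊆ T) :
    ∀ x ∈ E, ∃ y ∈ E, x = ⁅y, a⁆ := by
  have hT : IsSink a ((fun y => ⁅y, a⁆) '' E) := by
    refine ⟨hE.1.image _, fun x => ?_⟩
    obtain ⟨N, hN⟩ := hE.2 x
    refine ⟨N + 1, fun n hn => ?_⟩
    cases n with
    | zero => omega
    | succ m => exact ⟨engel a x m, hN m (by omega), rfl⟩
  intro x hx
  obtain ⟨y, hy, hxy⟩ := hmin _ hT hx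
  exact ⟨y, hy, hxy.symm⟩
end

section
/- Let G be a group such that G/Z(G) is finite. Then the commutator subgroup G' is finite. (Schur's theorem) -/
open scoped commutatorElement

theorem stmt_5 {G : Type*} [Group G] (h : Finite (G ⧸ Subgroup.center G)) :
    Finite (commutator G) := by
  have key : ∀ a b c d : G, (a : G ⧸ Subgroup.center G) = c →
      (b : G ⧸ Subgroup.center G) = d → ⁅a, b⁆ = ⁅c, d⁆ := by
    intro a b c d hac hbd
    rw [QuotientGroup.eq, Subgroup.mem_center_iff] at hac hbd
    set z1 := a⁻¹ * c with hz1
    set z2 := b⁻¹ * d with hz2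
    have hc : c = a * z1 := by rw [hz1]; group
    have hd : d = b * z2 := by rw [hz2]; group
    rw [commutatorElement_def, commutatorElement_def, hc, hd]
    calc a * b * a⁻¹ * b⁻¹
        = a * (z1 * b) * (z2 * z1⁻¹) * a⁻¹ * z2⁻¹ * b⁻¹ := by
          rw [← hac b, show a * (b * z1) * (z2 * z1⁻¹) * a⁻¹ * z2⁻¹ * b⁻¹
              = a * b * (z1 * z2 * z1⁻¹) * a⁻¹ * z2⁻¹ * b⁻¹ by group,
            hbd z1, show a * b * (z2 * z1 * z1⁻¹) * a⁻¹ * z2⁻¹ * b⁻¹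
              = a * b * (z2 * a⁻¹) * z2⁻¹ * b⁻¹ by group, ← hbd a⁻¹]
          group
      _ = a * z1 * (b * z2) * (a * z1)⁻¹ * (b * z2)⁻¹ := by group
  let F : G ⧸ Subgroup.center G → G ⧸ Subgroup.center G → G :=
    Quotient.lift₂ (fun a b => ⁅a, b⁆)
      (fun a b c d hac hbd => key a b c d (Quotient.sound hac) (Quotient.sound hbd))
  have hsub : commutatorSet G ⊆ Set.range (fun p : (G ⧸ Subgroup.center G) × _ => F p.1 p.2) := by
    rintro x ⟨a, b, rfl⟩
    exact ⟨(a, b), rfl⟩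
  have : Finite (commutatorSet G) :=
    ((Set.finite_range _).subset hsub).to_subtype
  infer_instance
end

section
/- Let G be a group and k a positive integer such that G/Z_k(G) is finite, where Z_k(G) is the k-th term of the upper central series. Then γ_{k+1}(G), the (k+1)-th term of the lower central series, is finite. (Baer's theorem) -/
open Subgroup Pointwise
open scoped commutatorElement

section Helpers

variable {G : Type*} [Group G]

private lemma comm_central_left {a b z : G} (hz : z ∈ Subgroup.center G) :
    ⁅a * z, b⁆ = ⁅a, b⁆ := by
  have hz' := Subgroup.mem_center_iff.mp hz
  simp only [commutatorElement_def, mul_inv_rev]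
  calc a * z * b * (z⁻¹ * a⁻¹) * b⁻¹ = a * (z * b * z⁻¹) * a⁻¹ * b⁻¹ := by group
    _ = a * b * a⁻¹ * b⁻¹ := by rw [← hz' b]; group

private lemma comm_central_right {a b z : G} (hz : z ∈ Subgroup.center G) :
    ⁅a, b * z⁆ = ⁅a, b⁆ := by
  rw [← commutatorElement_inv, comm_central_left hz, commutatorElement_inv]

/-- If `G/Z(G)` is finite, the set of commutators is finite. -/
private lemma finite_commutatorSet_of_finite_quotient_center
    (h : Finite (G ⧸ Subgroup.center G)) : Finite (commutatorSet G) := by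
  classical
  let w : (G ⧸ Subgroup.center G) → (G ⧸ Subgroup.center G) → G := fun x y =>
    Quotient.liftOn₂' x y (fun a b => ⁅a, b⁆) (by
      intro a₁ a₂ b₁ b₂ h₁ h₂
      rw [QuotientGroup.leftRel_apply] at h₁ h₂
      show ⁅a₁, a₂⁆ = ⁅b₁, b₂⁆
      have hb : b₁ = a₁ * (a₁⁻¹ * b₁) := by group
      have hb2 : b₂ = a₂ * (a₂⁻¹ * b₂) := by group
      rw [hb, hb2, comm_central_left h₁, comm_central_right h₂])
  have hsub : commutatorSet G ⊆ Set.range (fun p : (G ⧸ Subgroup.center G) × (G ⧸ Subgroup.center G) => w p.1 p.2) := by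
    rintro x ⟨a, b, rfl⟩
    exact ⟨(QuotientGroup.mk a, QuotientGroup.mk b), rfl⟩
  exact ((Set.finite_range _).subset hsub).to_subtype

/-- sup of two finite elementwise-commuting subgroups is finite -/
private lemma finite_sup_of_commute (K₁ K₂ : Subgroup G) [Finite K₁] [Finite K₂]
    (hc : ∀ x ∈ K₁, ∀ y ∈ K₂, Commute x y) : Finite (K₁ ⊔ K₂ : Subgroup G) := by
  have hmul : ((K₁ ⊔ K₂ : Subgroup G) : Set G) ⊆ (K₁ : Set G) * (K₂ : Set G) := by
    let P : Subgroup G :=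
      { carrier := (K₁ : Set G) * (K₂ : Set G)
        one_mem' := ⟨1, one_mem _, 1, one_mem _, one_mul 1⟩
        mul_mem' := by
          rintro _ _ ⟨a, ha, b, hb, rfl⟩ ⟨c, hc', d, hd, rfl⟩
          refine ⟨a * c, mul_mem ha hc', b * d, mul_mem hb hd, ?_⟩
          have : b * c = c * b := hc c hc' b hb |>.symm
          calc a * c * (b * d) = a * (c * b) * d := by group
            _ = a * (b * c) * d := by rw [this]
            _ = a * b * (c * d) := by group
        inv_mem' := by
          rintro _ ⟨a, ha, b, hb, rfl⟩
          refine ⟨a⁻¹, inv_mem ha, b⁻¹, inv_mem hb, ?_⟩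
          show a⁻¹ * b⁻¹ = (a * b)⁻¹
          rw [mul_inv_rev]
          exact ((hc a ha b hb).inv_inv).eq }
    have hle : K₁ ⊔ K₂ ≤ P := by
      refine sup_le ?_ ?_
      · intro x hx; exact ⟨x, hx, 1, one_mem _, mul_one x⟩
      · intro y hy; exact ⟨1, one_mem _, y, hy, one_mul y⟩
    exact hle
  have hfin : ((K₁ : Set G) * (K₂ : Set G)).Finite :=
    Set.Finite.mul (Set.toFinite _) (Set.toFinite _)
  exact (hfin.subset hmul).to_subtype

private lemma finite_closure_aux (F : Finset G) :
    (∀ s ∈ F, IsOfFinOrder s) → (∀ s ∈ F, ∀ t ∈ F, Commute s t) →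
    Finite (Subgroup.closure (F : Set G)) := by
  classical
  induction F using Finset.induction_on with
  | empty =>
    intro _ _
    rw [Finset.coe_empty, Subgroup.closure_empty]
    infer_instance
  | @insert a s ha ih =>
    intro htor hcomm
    have hins : Subgroup.closure ((insert a s : Finset G) : Set G)
        = Subgroup.zpowers a ⊔ Subgroup.closure (s : Set G) := by
      rw [Finset.coe_insert, Set.insert_eq, Subgroup.closure_union, Subgroup.zpowers_eq_closure]
    rw [hins]
    have h1 : Finite (Subgroup.zpowers a) :=
      (htor a (Finset.mem_insert_self a s)).finite_zpowers
    have h2 : Finite (Subgroup.closure (s : Set G)) :=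
      ih (fun x hx => htor x (Finset.mem_insert_of_mem hx))
        (fun x hx y hy => hcomm x (Finset.mem_insert_of_mem hx) y (Finset.mem_insert_of_mem hy))
    refine finite_sup_of_commute _ _ ?_
    intro x hx y hy
    have hay : Commute a y := by
      refine Subgroup.closure_induction
        (fun t ht => hcomm a (Finset.mem_insert_self a s) t (Finset.mem_insert_of_mem ht))
        (Commute.one_right a) (fun u v _ _ hu hv => hu.mul_right hv)
        (fun u _ hu => hu.inv_right) hy
    obtain ⟨n, rfl⟩ := Subgroup.mem_zpowers_iff.mp hx
    exact hay.zpow_left n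

/-- the closure of a finite set of pairwise-commuting torsion elements is finite. -/
private lemma finite_closure_of_commute_torsion (S : Set G) (hS : S.Finite)
    (htor : ∀ s ∈ S, IsOfFinOrder s) (hcomm : ∀ s ∈ S, ∀ t ∈ S, Commute s t) :
    Finite (Subgroup.closure S) := by
  obtain ⟨F, rfl⟩ : ∃ F : Finset G, (F : Set G) = S := ⟨hS.toFinset, hS.coe_toFinset⟩
  exact finite_closure_aux F (fun x hx => htor x hx) (fun x hx y hy => hcomm x hx y hy)

end Helpers

section ThreeSubgroups

variable {G : Type*} [Group G]

/-- `≤`-version of the three subgroups lemma. -/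
private lemma three_subgroups_le (A B C W : Subgroup G) [W.Normal]
    (h1 : ⁅⁅B, C⁆, A⁆ ≤ W) (h2 : ⁅⁅C, A⁆, B⁆ ≤ W) : ⁅⁅A, B⁆, C⁆ ≤ W := by
  let π := QuotientGroup.mk' W
  have hker : π.ker = W := QuotientGroup.ker_mk' W
  rw [← hker] at h1 h2 ⊢
  rw [← Subgroup.map_eq_bot_iff] at h1 h2 ⊢
  rw [Subgroup.map_commutator, Subgroup.map_commutator] at h1 h2 ⊢
  exact Subgroup.commutator_commutator_eq_bot_of_rotate h1 h2

private lemma ucs_step (j : ℕ) : ⁅Subgroup.upperCentralSeries G (j + 1), (⊤ : Subgroup G)⁆ ≤ Subgroup.upperCentralSeries G j := by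
  rw [Subgroup.commutator_le]
  intro x hx g _
  exact (Subgroup.mem_upperCentralSeries_succ_iff).mp hx g

private lemma lcs_ucs (i : ℕ) : ∀ j : ℕ,
    ⁅(⊤ : Subgroup G).lowerCentralSeries i, Subgroup.upperCentralSeries G (i + 1 + j)⁆ ≤ Subgroup.upperCentralSeries G j := by
  induction i with
  | zero =>
    intro j
    rw [Subgroup.commutator_comm]
    have : (0 : ℕ) + 1 + j = j + 1 := by omega
    rw [this]
    exact le_trans (Subgroup.commutator_mono le_rfl le_top) (ucs_step j)
  | succ i ih =>
    intro j
    rw [Subgroup.lowerCentralSeries_succ]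
    refine three_subgroups_le _ _ _ _ ?_ ?_
    · have e1 : ⁅(⊤ : Subgroup G), Subgroup.upperCentralSeries G (i + 1 + 1 + j)⁆
          ≤ Subgroup.upperCentralSeries G (i + 1 + j) := by
        rw [Subgroup.commutator_comm]
        have e : i + 1 + 1 + j = (i + 1 + j) + 1 := by omega
        rw [e]
        exact le_trans (Subgroup.commutator_mono le_rfl le_top) (ucs_step _)
      have e2 : ⁅⁅(⊤ : Subgroup G), Subgroup.upperCentralSeries G (i + 1 + 1 + j)⁆, (⊤ : Subgroup G).lowerCentralSeries i⁆
          ≤ ⁅Subgroup.upperCentralSeries G (i + 1 + j), (⊤ : Subgroup G).lowerCentralSeries i⁆ :=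
        Subgroup.commutator_mono e1 le_rfl
      refine le_trans e2 ?_
      rw [Subgroup.commutator_comm]
      exact ih j
    · have e1 : ⁅Subgroup.upperCentralSeries G (i + 1 + 1 + j), (⊤ : Subgroup G).lowerCentralSeries i⁆
          ≤ Subgroup.upperCentralSeries G (j + 1) := by
        rw [Subgroup.commutator_comm]
        have e : i + 1 + 1 + j = i + 1 + (j + 1) := by omega
        rw [e]
        exact ih (j + 1)
      exact le_trans (Subgroup.commutator_mono e1 le_rfl) (ucs_step j)

/-- Elements of `ucs (n+1)` centralize `lcs n`. -/
private lemma ucs_commute_lcs (n : ℕ) {c x : G} (hc : c ∈ Subgroup.upperCentralSeries G (n + 1))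
    (hx : x ∈ (⊤ : Subgroup G).lowerCentralSeries n) : Commute c x := by
  have h := lcs_ucs (G := G) n 0
  simp only [Nat.add_zero] at h
  have := h (Subgroup.commutator_mem_commutator hx hc)
  rw [Subgroup.upperCentralSeries_zero, Subgroup.mem_bot] at this
  exact (commutatorElement_eq_one_iff_commute.mp this).symm

end ThreeSubgroups

section LemmaA

variable {G : Type*} [Group G]

private lemma comm_eq_of_commute_right {p q c : G} (h : Commute c p) :
    ⁅p, q * c⁆ = ⁅p, q⁆ := by
  have h' : c * p⁻¹ * c⁻¹ = p⁻¹ := by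
    rw [h.inv_right.eq]; group
  simp only [commutatorElement_def, mul_inv_rev]
  calc p * (q * c) * p⁻¹ * (c⁻¹ * q⁻¹) = p * q * (c * p⁻¹ * c⁻¹) * q⁻¹ := by group
    _ = p * q * p⁻¹ * q⁻¹ := by rw [h']

private lemma comm_mul_left (a b c : G) : ⁅a * b, c⁆ = a * ⁅b, c⁆ * a⁻¹ * ⁅a, c⁆ := by
  simp only [commutatorElement_def, mul_inv_rev]
  group

/-- abelian case of the key lemma -/
private lemma lemmaA_abelian (N C : Subgroup G) [N.Normal]
    (hq : Finite (N ⧸ (Subgroup.center G).subgroupOf N))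
    (hfin : Finite (G ⧸ (C : Subgroup G)))
    (hcomm : ∀ c ∈ C, ∀ n ∈ N, Commute c n)
    (hab : ∀ x ∈ N, ∀ y ∈ N, Commute x y) :
    Finite (⁅N, (⊤ : Subgroup G)⁆ : Subgroup G) := by
  classical
  set m := Nat.card (N ⧸ (Subgroup.center G).subgroupOf N) with hm
  have hm0 : 0 < m := Nat.card_pos
  have hpow : ∀ n (hn : n ∈ N), n ^ m ∈ Subgroup.center G := by
    intro n hn
    have h1 : ((⟨n, hn⟩ : N) : N) ^ m ∈ (Subgroup.center G).subgroupOf N := by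
      have h2 : (QuotientGroup.mk (⟨n, hn⟩ : N) : N ⧸ (Subgroup.center G).subgroupOf N) ^ m = 1 :=
        pow_card_eq_one'
      rw [← QuotientGroup.mk_pow] at h2
      exact (QuotientGroup.eq_one_iff _).mp h2
    have := Subgroup.mem_subgroupOf.mp h1
    simpa using this
  set S : Set G := {g | ∃ g₁ ∈ N, ∃ g₂ ∈ (⊤ : Subgroup G), ⁅g₁, g₂⁆ = g} with hSdef
  have hTS : ⁅N, (⊤ : Subgroup G)⁆ = Subgroup.closure S := Subgroup.commutator_def N ⊤
  have hSsubN : ∀ s ∈ S, s ∈ N := by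
    rintro s ⟨p, hp, q, -, rfl⟩
    have : ⁅p, q⁆ = p * (q * p⁻¹ * q⁻¹) := by group
    rw [this]
    exact mul_mem hp (Subgroup.Normal.conj_mem ‹N.Normal› p⁻¹ (inv_mem hp) q)
  -- finiteness of S
  have hSfin : S.Finite := by
    let w : (N ⧸ (Subgroup.center G).subgroupOf N) → (G ⧸ (C : Subgroup G)) → G := fun x y =>
      Quotient.liftOn₂' x y (fun p q => ⁅(p : G), q⁆) (by
        intro p₁ q₁ p₂ q₂ h₁ h₂
        rw [QuotientGroup.leftRel_apply] at h₁ h₂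
        show ⁅(p₁ : G), q₁⁆ = ⁅(p₂ : G), q₂⁆
        have hz : ((p₁⁻¹ * p₂ : N) : G) ∈ Subgroup.center G := Subgroup.mem_subgroupOf.mp h₁
        have hc' : Commute (q₁⁻¹ * q₂) (p₁ : G) := hcomm _ h₂ _ p₁.2
        have e1 : (p₂ : G) = (p₁ : G) * ((p₁⁻¹ * p₂ : N) : G) := by push_cast; group
        have e2 : q₂ = q₁ * (q₁⁻¹ * q₂) := by group
        have : ⁅(p₂ : G), q₂⁆ = ⁅(p₁ : G), q₁⁆ := by
          rw [e1, e2, comm_central_left hz, comm_eq_of_commute_right hc']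
        exact this.symm)
    have hsub : S ⊆ Set.range (fun ab : (N ⧸ (Subgroup.center G).subgroupOf N) × (G ⧸ (C : Subgroup G)) => w ab.1 ab.2) := by
      rintro x ⟨p, hp, q, -, rfl⟩
      exact ⟨(QuotientGroup.mk (⟨p, hp⟩ : N), QuotientGroup.mk q), rfl⟩
    exact (Set.finite_range _).subset hsub
  -- torsion
  have hStor : ∀ s ∈ S, IsOfFinOrder s := by
    rintro s ⟨p, hp, q, -, rfl⟩
    have hmem : ∀ j : ℕ, ⁅p ^ j, q⁆ ∈ N := by
      intro j
      have : ⁅p ^ j, q⁆ = p ^ j * (q * (p ^ j)⁻¹ * q⁻¹) := by group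
      rw [this]
      exact mul_mem (pow_mem hp j)
        (Subgroup.Normal.conj_mem ‹N.Normal› (p ^ j)⁻¹ (inv_mem (pow_mem hp j)) q)
    have key : ∀ j : ℕ, ⁅p, q⁆ ^ j = ⁅p ^ j, q⁆ := by
      intro j
      induction j with
      | zero => simp
      | succ j ih =>
        have e : p ^ (j + 1) = p * p ^ j := by rw [pow_succ']
        rw [e, comm_mul_left]
        have hcpj : Commute p ⁅p ^ j, q⁆ := hab p hp _ (hmem j)
        have e2 : p * ⁅p ^ j, q⁆ * p⁻¹ = ⁅p ^ j, q⁆ := by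
          rw [hcpj.eq]; group
        rw [e2, ← ih, pow_succ]
    have hpq1 : ⁅p, q⁆ ^ m = 1 := by
      rw [key m, commutatorElement_eq_one_iff_mul_comm]
      exact (Subgroup.mem_center_iff.mp (hpow p hp) q).symm
    exact isOfFinOrder_iff_pow_eq_one.mpr ⟨m, hm0, hpq1⟩
  rw [hTS]
  exact finite_closure_of_commute_torsion S hSfin hStor
    (fun x hx y hy => hab x (hSsubN x hx) y (hSsubN y hy))

/-- Key lemma: N normal with N/(N∩Z(G)) finite and C ≤ C_G(N) of finite index implies [N,G] finite -/
private lemma lemmaA (N C : Subgroup G) [hN : N.Normal]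
    (hq : Finite (N ⧸ (Subgroup.center G).subgroupOf N))
    (hfin : Finite (G ⧸ (C : Subgroup G)))
    (hcomm : ∀ c ∈ C, ∀ n ∈ N, Commute c n) :
    Finite (⁅N, (⊤ : Subgroup G)⁆ : Subgroup G) := by
  classical
  -- (1) N/Z(N) is finite
  have hccen : (Subgroup.center G).subgroupOf N ≤ Subgroup.center N := by
    intro x hx
    rw [Subgroup.mem_subgroupOf] at hx
    rw [Subgroup.mem_center_iff]
    intro y
    exact Subtype.ext (Subgroup.mem_center_iff.mp hx (y : G))
  have hNcen : Finite (N ⧸ Subgroup.center N) := by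
    have hle : (Subgroup.center G).subgroupOf N ≤
        Subgroup.comap (MonoidHom.id N) (Subgroup.center N) := by
      simpa using hccen
    have hsurj : Function.Surjective
        (QuotientGroup.map ((Subgroup.center G).subgroupOf N) (Subgroup.center N)
          (MonoidHom.id N) hle) := by
      intro x
      obtain ⟨y, rfl⟩ := QuotientGroup.mk_surjective x
      exact ⟨QuotientGroup.mk y, rfl⟩
    exact Finite.of_surjective _ hsurj
  -- (2) Schur: ⁅N,N⁆ is finite
  haveI h1 : Finite (commutatorSet N) := finite_commutatorSet_of_finite_quotient_center hNcen
  haveI h2 : Finite (_root_.commutator N) := inferInstance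
  have hmapeq : Subgroup.map N.subtype (_root_.commutator N) = ⁅N, N⁆ := by
    rw [commutator_def, Subgroup.map_commutator]
    congr 1 <;> simp [← MonoidHom.range_eq_map, N.range_subtype]
  haveI hNfin : Finite (⁅N, N⁆ : Subgroup G) := by
    rw [← hmapeq]
    have hset : ((Subgroup.map N.subtype (_root_.commutator N)) : Set G)
        = N.subtype '' (_root_.commutator N) := rfl
    have : ((Subgroup.map N.subtype (_root_.commutator N)) : Set G).Finite := by
      rw [hset]; exact Set.Finite.image _ (Set.toFinite _)
    exact this.to_subtype
  set K : Subgroup G := ⁅N, N⁆ with hK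
  haveI hKnorm : K.Normal := by rw [hK]; infer_instance
  set π := QuotientGroup.mk' K with hπ
  have hπsurj : Function.Surjective π := QuotientGroup.mk'_surjective K
  set N' := Subgroup.map π N with hN'
  haveI hN'norm : N'.Normal := hN.map π hπsurj
  set C' := Subgroup.map π C with hC'
  have hcomm' : ∀ c ∈ C', ∀ n ∈ N', Commute c n := by
    rintro _ ⟨c, hc, rfl⟩ _ ⟨n, hn, rfl⟩
    show π c * π n = π n * π c
    rw [← map_mul, ← map_mul, (hcomm c hc n hn).eq]
  have hfin' : Finite ((G ⧸ K) ⧸ C') := by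
    have hwd : ∀ a b : G, QuotientGroup.leftRel C a b →
        QuotientGroup.leftRel C' (π a) (π b) := by
      intro a b hab
      rw [QuotientGroup.leftRel_apply] at hab ⊢
      rw [← map_inv, ← map_mul]
      exact Subgroup.mem_map_of_mem π hab
    have hsurj : Function.Surjective
        (Quotient.map' π hwd : G ⧸ (C : Subgroup G) → (G ⧸ K) ⧸ C') := by
      intro x
      obtain ⟨q, rfl⟩ := QuotientGroup.mk_surjective x
      obtain ⟨g, rfl⟩ := hπsurj q
      exact ⟨QuotientGroup.mk g, rfl⟩
    exact Finite.of_surjective _ hsurj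
  have hcenmap : ∀ z ∈ Subgroup.center G, π z ∈ Subgroup.center (G ⧸ K) := by
    intro z hz
    rw [Subgroup.mem_center_iff]
    intro q
    obtain ⟨g, rfl⟩ := hπsurj q
    rw [← map_mul, ← map_mul, Subgroup.mem_center_iff.mp hz g]
  have hq' : Finite (N' ⧸ (Subgroup.center (G ⧸ K)).subgroupOf N') := by
    let ψ : N →* N' := π.subgroupMap N
    have hψsurj : Function.Surjective ψ := π.subgroupMap_surjective N
    let χ : N →* N' ⧸ (Subgroup.center (G ⧸ K)).subgroupOf N' :=
      (QuotientGroup.mk' _).comp ψ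
    have hχsurj : Function.Surjective χ :=
      (QuotientGroup.mk'_surjective _).comp hψsurj
    have hker : (Subgroup.center G).subgroupOf N ≤ χ.ker := by
      intro x hx
      rw [Subgroup.mem_subgroupOf] at hx
      rw [MonoidHom.mem_ker]
      show QuotientGroup.mk (ψ x) = 1
      rw [QuotientGroup.eq_one_iff]
      rw [Subgroup.mem_subgroupOf]
      exact hcenmap _ hx
    have hlift : Function.Surjective
        (QuotientGroup.lift ((Subgroup.center G).subgroupOf N) χ hker) := by
      intro x
      obtain ⟨y, hy⟩ := hχsurj x
      exact ⟨QuotientGroup.mk y, hy⟩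
    exact Finite.of_surjective _ hlift
  have hab' : ∀ x ∈ N', ∀ y ∈ N', Commute x y := by
    rintro _ ⟨x, hx, rfl⟩ _ ⟨y, hy, rfl⟩
    have hxyK : ⁅x, y⁆ ∈ K := Subgroup.commutator_mem_commutator hx hy
    have h1 : π ⁅x, y⁆ = 1 := (QuotientGroup.eq_one_iff _).mpr hxyK
    rw [map_commutatorElement] at h1
    exact commutatorElement_eq_one_iff_commute.mp h1
  have hfinQ : Finite (⁅N', (⊤ : Subgroup (G ⧸ K))⁆ : Subgroup (G ⧸ K)) :=
    lemmaA_abelian N' C' hq' hfin' hcomm' hab'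
  -- pull back
  set T : Subgroup G := ⁅N, (⊤ : Subgroup G)⁆ with hT
  have hmapT : Subgroup.map π T = ⁅N', (⊤ : Subgroup (G ⧸ K))⁆ := by
    rw [hT, Subgroup.map_commutator]
    congr 1
    exact Subgroup.map_top_of_surjective π hπsurj
  let φ := π.comp T.subtype
  have hkerφ : φ.ker = K.subgroupOf T := by
    ext x
    rw [MonoidHom.mem_ker, Subgroup.mem_subgroupOf]
    show (QuotientGroup.mk (x : G) : G ⧸ K) = 1 ↔ (x : G) ∈ K
    exact QuotientGroup.eq_one_iff _
  have hrangeφ : φ.range = Subgroup.map π T := by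
    ext x
    constructor
    · rintro ⟨y, rfl⟩
      exact Subgroup.mem_map_of_mem π y.2
    · rintro ⟨y, hy, rfl⟩
      exact ⟨⟨y, hy⟩, rfl⟩
  haveI hfr : Finite φ.range := by
    rw [hrangeφ, hmapT]
    exact hfinQ
  haveI hq5 : Finite (T ⧸ K.subgroupOf T) := by
    rw [← hkerφ]
    exact Finite.of_equiv _ (QuotientGroup.quotientKerEquivRange φ).symm.toEquiv
  haveI hq6 : Finite (K.subgroupOf T) := by
    have hinj : Function.Injective
        (fun x : K.subgroupOf T => (⟨(x : T), Subgroup.mem_subgroupOf.mp x.2⟩ : K)) := by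
      intro a b hab
      ext
      exact congrArg (fun z : K => (z : G)) hab
    exact Finite.of_injective _ hinj
  have e : (↥T) ≃ (↥T ⧸ K.subgroupOf T) × ↥(K.subgroupOf T) :=
    Subgroup.groupEquivQuotientProdSubgroup
  exact Finite.of_equiv _ e.symm

end LemmaA

section Main

private lemma lcs_succ_eq {G : Type*} [Group G] (n : ℕ) :
    (⊤ : Subgroup G).lowerCentralSeries (n + 1) = ⁅(⊤ : Subgroup G).lowerCentralSeries n, (⊤ : Subgroup G)⁆ := by
  rw [Subgroup.commutator_def]
  rfl

private lemma lcs_le_map {G H : Type*} [Group G] [Group H] (f : G →* H)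
    (hf : Function.Surjective f) (n : ℕ) :
    (⊤ : Subgroup H).lowerCentralSeries n ≤ Subgroup.map f ((⊤ : Subgroup G).lowerCentralSeries n) := by
  induction n with
  | zero =>
    rw [Subgroup.lowerCentralSeries_zero, Subgroup.lowerCentralSeries_zero, Subgroup.map_top_of_surjective f hf]
  | succ n ih =>
    rw [lcs_succ_eq, lcs_succ_eq]
    calc ⁅(⊤ : Subgroup H).lowerCentralSeries n, (⊤ : Subgroup H)⁆
        ≤ ⁅Subgroup.map f ((⊤ : Subgroup G).lowerCentralSeries n), Subgroup.map f ⊤⁆ :=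
          Subgroup.commutator_mono ih (by rw [Subgroup.map_top_of_surjective f hf])
      _ = Subgroup.map f ⁅(⊤ : Subgroup G).lowerCentralSeries n, (⊤ : Subgroup G)⁆ := by
          rw [Subgroup.map_commutator]

private lemma finite_quot_subgroupOf_of_finite_map {G : Type*} [Group G] (N : Subgroup G)
    (h : Finite (Subgroup.map (QuotientGroup.mk' (Subgroup.center G)) N)) :
    Finite (N ⧸ (Subgroup.center G).subgroupOf N) := by
  let φ := (QuotientGroup.mk' (Subgroup.center G)).comp N.subtype
  have hker : φ.ker = (Subgroup.center G).subgroupOf N := by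
    ext x
    rw [MonoidHom.mem_ker, Subgroup.mem_subgroupOf]
    show (QuotientGroup.mk (x : G) : G ⧸ Subgroup.center G) = 1 ↔ (x : G) ∈ Subgroup.center G
    exact QuotientGroup.eq_one_iff _
  have hrange : φ.range = Subgroup.map (QuotientGroup.mk' (Subgroup.center G)) N := by
    ext x
    constructor
    · rintro ⟨y, rfl⟩
      exact Subgroup.mem_map_of_mem _ y.2
    · rintro ⟨y, hy, rfl⟩
      exact ⟨⟨y, hy⟩, rfl⟩
  haveI : Finite φ.range := by rw [hrange]; exact h
  rw [← hker]
  exact Finite.of_equiv _ (QuotientGroup.quotientKerEquivRange φ).symm.toEquiv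

private theorem baer : ∀ (j : ℕ) (G : Type*) [Group G],
    Finite (G ⧸ Subgroup.upperCentralSeries G (j + 1)) → Finite ((⊤ : Subgroup G).lowerCentralSeries (j + 1)) := by
  intro j
  induction j with
  | zero =>
    intro G _ h
    rw [Subgroup.upperCentralSeries_one] at h
    haveI := finite_commutatorSet_of_finite_quotient_center h
    have hfin : Finite (_root_.commutator G) := inferInstance
    rw [Subgroup.top_lowerCentralSeries_one]
    exact hfin
  | succ j ih =>
    intro G _ h
    set Z := Subgroup.center G with hZ
    set π := QuotientGroup.mk' Z with hπdef
    have hπsurj : Function.Surjective π := QuotientGroup.mk'_surjective Z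
    have hcomap : Subgroup.comap π (Subgroup.upperCentralSeries (G ⧸ Z) (j + 1))
        = Subgroup.upperCentralSeries G (j + 2) :=
      Subgroup.comap_upperCentralSeries_quotient_center (j + 1)
    have hmapucs : Subgroup.map π (Subgroup.upperCentralSeries G (j + 2))
        = Subgroup.upperCentralSeries (G ⧸ Z) (j + 1) := by
      rw [← hcomap]
      exact Subgroup.map_comap_eq_self_of_surjective hπsurj _
    have hZle : Z ≤ Subgroup.upperCentralSeries G (j + 2) := by
      rw [hZ, ← Subgroup.upperCentralSeries_one]
      exact Subgroup.upperCentralSeries_mono G (by omega)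
    haveI hfinQ : Finite ((G ⧸ Z) ⧸ Subgroup.upperCentralSeries (G ⧸ Z) (j + 1)) := by
      rw [← hmapucs]
      have e := QuotientGroup.quotientQuotientEquivQuotient Z (Subgroup.upperCentralSeries G (j + 2)) hZle
      exact Finite.of_equiv _ e.symm.toEquiv
    have hlcsQ : Finite ((⊤ : Subgroup (G ⧸ Z)).lowerCentralSeries (j + 1)) := ih (G ⧸ Z) hfinQ
    set N := (⊤ : Subgroup G).lowerCentralSeries (j + 1) with hNdef
    have hmaplcs : Subgroup.map π N = (⊤ : Subgroup (G ⧸ Z)).lowerCentralSeries (j + 1) :=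
      le_antisymm (Subgroup.lowerCentralSeries.map π (j + 1)) (lcs_le_map π hπsurj (j + 1))
    have hq : Finite (N ⧸ (Subgroup.center G).subgroupOf N) := by
      apply finite_quot_subgroupOf_of_finite_map
      rw [show QuotientGroup.mk' (Subgroup.center G) = π from rfl, hmaplcs]
      exact hlcsQ
    have hcomm : ∀ c ∈ Subgroup.upperCentralSeries G (j + 2), ∀ n ∈ N, Commute c n := by
      intro c hc n hn
      exact ucs_commute_lcs (j + 1) hc hn
    have hfin2 : Finite (G ⧸ Subgroup.upperCentralSeries G (j + 2)) := h
    have := lemmaA N (Subgroup.upperCentralSeries G (j + 2)) hq hfin2 hcomm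
    rw [lcs_succ_eq (j + 1)]
    exact this

end Main

theorem stmt_6 {G : Type*} [Group G] (k : ℕ) (hk : 0 < k)
    (h : Finite (G ⧸ Subgroup.upperCentralSeries G k)) :
    Finite ((⊤ : Subgroup G).lowerCentralSeries k) := by
  obtain ⟨j, rfl⟩ : ∃ j, k = j + 1 := ⟨k - 1, by omega⟩
  exact baer j G h
end

section
/- In any group G, a finite subset X that is invariant under conjugation by all elements of G and consists of elements of finite order generates a finite subgroup. (Dicman's Lemma) -/
open scoped commutatorElement

/-- A commutator is unchanged when multiplying the entries by central elements. -/
lemma commutator_mul_center {K : Type*} [Group K] (a b z w : K)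
    (hz : z ∈ Subgroup.center K) (hw : w ∈ Subgroup.center K) :
    ⁅a * z, b * w⁆ = ⁅a, b⁆ := by
  have hz' : ∀ g : K, g * z = z * g := fun g => Subgroup.mem_center_iff.mp hz g
  have hw' : ∀ g : K, g * w = w * g := fun g => Subgroup.mem_center_iff.mp hw g
  simp only [commutatorElement_def, mul_inv_rev]
  calc a * z * (b * w) * (z⁻¹ * a⁻¹) * (w⁻¹ * b⁻¹)
      = a * (z * (b * w) * z⁻¹) * a⁻¹ * w⁻¹ * b⁻¹ := by group
    _ = a * (b * w) * a⁻¹ * w⁻¹ * b⁻¹ := by rw [← hz' (b * w)]; group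
    _ = a * b * (w * a⁻¹ * w⁻¹) * b⁻¹ := by group
    _ = a * b * a⁻¹ * b⁻¹ := by rw [← hw' a⁻¹]; group

theorem stmt_7 {G : Type*} [Group G] (X : Finset G)
    (hconj : ∀ g : G, ∀ x ∈ X, g⁻¹ * x * g ∈ X)
    (hord : ∀ x ∈ X, IsOfFinOrder x) :
    Finite (Subgroup.closure (X : Set G)) := by
  classical
  set H : Subgroup G := Subgroup.closure (X : Set G) with hH
  -- the conjugation action of `G` on `X`
  have hmem : ∀ (g : G), ∀ x ∈ X, g * x * g⁻¹ ∈ X := by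
    intro g x hx
    simpa using hconj g⁻¹ x hx
  let e : G → Equiv.Perm {x : G // x ∈ X} := fun g =>
    { toFun := fun x => ⟨g * x * g⁻¹, hmem g x x.2⟩
      invFun := fun x => ⟨g⁻¹ * x * g, by simpa using hconj g x x.2⟩
      left_inv := fun x => by ext; simp [mul_assoc]
      right_inv := fun x => by ext; simp [mul_assoc] }
  let f : G →* Equiv.Perm {x : G // x ∈ X} :=
    { toFun := e
      map_one' := by ext x; simp [e]
      map_mul' := fun g h => by ext x; simp [e, mul_assoc] }
  -- the centralizer of `X`
  set C : Subgroup G := Subgroup.centralizer (X : Set G) with hC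
  -- elements of `C` commute with everything in `H`
  have hcentral : ∀ c ∈ C, ∀ h ∈ H, c * h = h * c := by
    intro c hc h hh
    have hXc : (X : Set G) ⊆ (Subgroup.centralizer {c} : Set G) := by
      intro x hx
      rw [SetLike.mem_coe, Subgroup.mem_centralizer_iff]
      intro y hy
      rcases hy with rfl
      exact (hc x hx).symm
    have : h ∈ Subgroup.centralizer {c} := (Subgroup.closure_le _).mpr hXc hh
    exact Subgroup.mem_centralizer_iff.mp this c rfl
  -- kernel of `f` is contained in `C`
  have hker : f.ker ≤ C := by
    intro g hg
    rw [MonoidHom.mem_ker] at hg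
    rw [hC, Subgroup.mem_centralizer_iff]
    intro x hx
    have := congrArg (fun σ => (σ ⟨x, hx⟩ : G)) hg
    simp only [Equiv.Perm.coe_one, id] at this
    have hgx : g * x * g⁻¹ = x := this
    calc x * g = g * x * g⁻¹ * g := by rw [hgx]
      _ = g * x := by group
  -- `C.subgroupOf H` is central in `H`
  set Z : Subgroup H := C.subgroupOf H with hZ
  have hZcentral : Z ≤ Subgroup.center H := by
    intro z hz
    rw [Subgroup.mem_center_iff]
    intro g
    ext
    exact (hcentral z (by exact hz) g g.2).symm
  -- `Z` has finite index in `H`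
  have hKZ : (f.comp H.subtype).ker ≤ Z := by
    intro h hh
    rw [MonoidHom.mem_ker, MonoidHom.comp_apply] at hh
    exact hker hh
  have hfin1 : Finite (H ⧸ (f.comp H.subtype).ker) := by
    have : Finite (Equiv.Perm {x : G // x ∈ X}) := by infer_instance
    exact Finite.of_injective _ (QuotientGroup.quotientKerEquivRange (f.comp H.subtype)).injective
  have hFIK : ((f.comp H.subtype).ker).FiniteIndex :=
    Subgroup.finiteIndex_of_finite_quotient
  have hFIZ : Z.FiniteIndex := Subgroup.finiteIndex_of_le hKZ
  have hfinQ : Finite (H ⧸ Z) := Subgroup.finite_quotient_of_finiteIndex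
  -- the commutator set of `H` is finite
  have hcommSet : Finite (commutatorSet H) := by
    have hsub : commutatorSet H ⊆
        Set.range (fun p : (H ⧸ Z) × (H ⧸ Z) => ⁅p.1.out, p.2.out⁆) := by
      rintro _ ⟨a, b, rfl⟩
      refine ⟨(QuotientGroup.mk a, QuotientGroup.mk b), ?_⟩
      simp only
      have ha : (QuotientGroup.mk a : H ⧸ Z).out = a * (a⁻¹ * (QuotientGroup.mk a : H ⧸ Z).out) := by
        group
      have hb : (QuotientGroup.mk b : H ⧸ Z).out = b * (b⁻¹ * (QuotientGroup.mk b : H ⧸ Z).out) := by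
        group
      have hza : a⁻¹ * (QuotientGroup.mk a : H ⧸ Z).out ∈ Subgroup.center H := by
        apply hZcentral
        rw [← QuotientGroup.eq]
        exact (QuotientGroup.out_eq' _).symm
      have hzb : b⁻¹ * (QuotientGroup.mk b : H ⧸ Z).out ∈ Subgroup.center H := by
        apply hZcentral
        rw [← QuotientGroup.eq]
        exact (QuotientGroup.out_eq' _).symm
      rw [ha, hb, commutator_mul_center _ _ _ _ hza hzb]
    exact Set.Finite.subset (Set.finite_range _) hsub |>.to_subtype
  -- Schur's theorem: the commutator subgroup of `H` is finite
  have hcommFin : Finite (_root_.commutator H) := by infer_instance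
  -- the abelianization of `H` is finite
  have habFin : Finite (Abelianization H) := by
    set T : Set H := H.subtype ⁻¹' (X : Set G) with hT
    have hTfin : T.Finite := Set.Finite.preimage (Subtype.coe_injective.injOn) X.finite_toSet
    have hTtop : Subgroup.closure T = ⊤ := Subgroup.closure_preimage_eq_top (X : Set G)
    have hgen : Subgroup.closure (Abelianization.of '' T) = (⊤ : Subgroup (Abelianization H)) := by
      rw [← MonoidHom.map_closure, hTtop]
      exact Subgroup.map_top_of_surjective _ (fun y => Quotient.inductionOn' y (fun a => ⟨a, rfl⟩))
    have htor : Monoid.IsTorsion (Abelianization H) := by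
      intro a
      have hmem : a ∈ CommGroup.torsion (Abelianization H) := by
        have : Subgroup.closure (Abelianization.of '' T) ≤ CommGroup.torsion (Abelianization H) := by
          apply Subgroup.closure_le _ |>.mpr
          rintro _ ⟨x, hx, rfl⟩
          rw [SetLike.mem_coe, CommGroup.mem_torsion]
          have hx' : IsOfFinOrder x := by
            have : IsOfFinOrder (x : G) := hord _ hx
            exact Subtype.coe_injective.isOfFinOrder_iff.mp
              (by simpa using this : IsOfFinOrder (H.subtype x))
          exact (Abelianization.of : H →* Abelianization H).isOfFinOrder hx'
        exact this (hgen ▸ Subgroup.mem_top a)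
      exact (CommGroup.mem_torsion a).mp hmem
    have hfg : Group.FG (Abelianization H) := by
      rw [Group.fg_iff]
      exact ⟨Abelianization.of '' T, hgen, hTfin.image _⟩
    exact CommGroup.finite_of_fg_torsion _ htor
  -- conclude: `H` is an extension of two finite groups
  have : Finite (H ⧸ _root_.commutator H) := habFin
  exact Finite.of_equiv _ (Subgroup.groupEquivQuotientProdSubgroup (s := _root_.commutator H)).symm
end

section
/- Let G = H⟨a⟩ where H is a nilpotent normal subgroup of G of class c, a is n-Engel in G, and let K = Z(H). Then K ≤ Z_n(G), the n-th term of the upper central series of G. -/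
open scoped commutatorElement

lemma engel_shift {G : Type*} [Group G] (a x : G) (m : ℕ) :
    engel a x (m + 1) = engel a ⁅x, a⁆ m := by
  induction m with
  | zero => rfl
  | succ k ih => show ⁅engel a x (k+1), a⁆ = _; rw [ih]; rfl

lemma comm_mem_center {G : Type*} [Group G] (H : Subgroup G) [H.Normal] (a x : G)
    (hx : x ∈ H ⊓ Subgroup.centralizer (H : Set G)) :
    ⁅x, a⁆ ∈ H ⊓ Subgroup.centralizer (H : Set G) := by
  obtain ⟨hxH, hxC⟩ := Subgroup.mem_inf.mp hx
  refine Subgroup.mem_inf.mpr ⟨?_, ?_⟩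
  · have h1 : a * x⁻¹ * a⁻¹ ∈ H := Subgroup.Normal.conj_mem ‹H.Normal› _ (inv_mem hxH) a
    have : ⁅x, a⁆ = x * (a * x⁻¹ * a⁻¹) := by group
    rw [this]; exact mul_mem hxH h1
  · rw [Subgroup.mem_centralizer_iff]
    intro h hh
    rw [Subgroup.mem_centralizer_iff] at hxC
    have h2 : a⁻¹ * h * a ∈ H := Subgroup.Normal.conj_mem' ‹H.Normal› _ hh a
    have e1 : h * x = x * h := hxC h hh
    have e2 : (a⁻¹ * h * a) * x⁻¹ = x⁻¹ * (a⁻¹ * h * a) := by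
      have := hxC _ h2
      have := congrArg (fun z => x⁻¹ * z * x⁻¹) this
      simpa [mul_assoc] using this.symm
    show h * ⁅x, a⁆ = ⁅x, a⁆ * h
    have : ⁅x, a⁆ = x * (a * x⁻¹ * a⁻¹) := by group
    rw [this]
    calc h * (x * (a * x⁻¹ * a⁻¹)) = x * (h * (a * x⁻¹ * a⁻¹)) := by
          rw [← mul_assoc, e1, mul_assoc]
      _ = x * (a * ((a⁻¹ * h * a) * x⁻¹) * a⁻¹) := by group
      _ = x * (a * (x⁻¹ * (a⁻¹ * h * a)) * a⁻¹) := by rw [e2]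
      _ = x * (a * x⁻¹ * a⁻¹) * h := by group

theorem stmt_9 {G : Type*} [Group G] (H : Subgroup G) [H.Normal] (a : G)
    (hgen : H ⊔ Subgroup.closure {a} = ⊤)
    (hH : Group.IsNilpotent ↥H) (n : ℕ)
    (hEngel : ∀ x : G, engel a x n = 1) :
    H ⊓ Subgroup.centralizer (H : Set G) ≤ upperCentralSeries G n := by
  suffices key : ∀ m (x : G), x ∈ H ⊓ Subgroup.centralizer (H : Set G) →
      engel a x m = 1 → x ∈ upperCentralSeries G m by
    intro x hx
    exact key n x hx (hEngel x)
  intro m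
  induction m with
  | zero =>
    intro x _ hx1
    have : x = 1 := hx1
    rw [this]; exact one_mem _
  | succ k ih =>
    intro x hxK hx1
    have hyK : ⁅x, a⁆ ∈ H ⊓ Subgroup.centralizer (H : Set G) := comm_mem_center H a x hxK
    have hy1 : engel a ⁅x, a⁆ k = 1 := by rw [← engel_shift]; exact hx1
    have hyZ : ⁅x, a⁆ ∈ upperCentralSeries G k := ih _ hyK hy1
    have hnorm : (upperCentralSeries G k).Normal := (inferInstance : (Subgroup.upperCentralSeries G k).Normal)
    show x ∈ Subgroup.upperCentralSeries G (k + 1)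
    rw [Subgroup.mem_upperCentralSeries_succ_iff]
    intro g
    -- the set of g with x * g * x⁻¹ * g⁻¹ ∈ Z_k is a subgroup
    let S : Subgroup G :=
      { carrier := {g | x * g * x⁻¹ * g⁻¹ ∈ upperCentralSeries G k}
        one_mem' := by simp [one_mem]
        mul_mem' := by
          intro p q hp hq
          have hcp : p * (x * q * x⁻¹ * q⁻¹) * p⁻¹ ∈ upperCentralSeries G k :=
            hnorm.conj_mem _ hq p
          have : x * (p * q) * x⁻¹ * (p * q)⁻¹ =
              (x * p * x⁻¹ * p⁻¹) * (p * (x * q * x⁻¹ * q⁻¹) * p⁻¹) := by group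
          show x * (p * q) * x⁻¹ * (p * q)⁻¹ ∈ upperCentralSeries G k
          rw [this]; exact mul_mem hp hcp
        inv_mem' := by
          intro p hp
          show x * p⁻¹ * x⁻¹ * p⁻¹⁻¹ ∈ upperCentralSeries G k
          have : x * p⁻¹ * x⁻¹ * p⁻¹⁻¹ = p⁻¹ * (x * p * x⁻¹ * p⁻¹)⁻¹ * p := by group
          rw [this]
          exact hnorm.conj_mem' _ (inv_mem hp) p }
    have hHS : H ≤ S := by
      intro h hh
      show x * h * x⁻¹ * h⁻¹ ∈ upperCentralSeries G k
      have : h * x = x * h := (Subgroup.mem_centralizer_iff.mp hxK.2) h hh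
      have e : x * h * x⁻¹ * h⁻¹ = 1 := by
        rw [← this]; group
      rw [e]; exact one_mem _
    have haS : a ∈ S := by
      show x * a * x⁻¹ * a⁻¹ ∈ upperCentralSeries G k
      simpa [commutatorElement_def] using hyZ
    have htop : (⊤ : Subgroup G) ≤ S := by
      rw [← hgen]
      exact sup_le hHS ((Subgroup.closure_le S).mpr (by simpa using haS))
    exact htop (Subgroup.mem_top g)
end

section
/- Let G be a group, H a hypercentral normal subgroup with nontrivial center Z = Z(H), G = H⟨a⟩, and a an Engel element of G. Then C_Z(a) ≤ Z(G) and C_Z(a) ≠ 1. -/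
open scoped commutatorElement

/-- A group is hypercentral iff every proper quotient has a nontrivial center. -/
def IsHypercentral (K : Type*) [Group K] : Prop :=
  ∀ (N : Subgroup K), N.Normal → N ≠ ⊤ → ∃ x : K, x ∉ N ∧ ∀ g : K, ⁅x, g⁆ ∈ N

theorem stmt_11 {G : Type*} [Group G] (H : Subgroup G) [H.Normal]
    (hH : IsHypercentral ↥H) (a : G)
    (hgen : H ⊔ Subgroup.closure {a} = ⊤)
    (hEngel : ∀ x : G, ∃ n : ℕ, engel a x n = 1)
    (hZ : H ⊓ Subgroup.centralizer (H : Set G) ≠ ⊥) :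
    (H ⊓ Subgroup.centralizer (H : Set G)) ⊓ Subgroup.centralizer {a} ≤ Subgroup.center G ∧
      (H ⊓ Subgroup.centralizer (H : Set G)) ⊓ Subgroup.centralizer {a} ≠ ⊥ := by
  have hNorm : H.Normal := inferInstance
  set Z := H ⊓ Subgroup.centralizer (H : Set G) with hZdef
  -- Z is closed under commutation with a
  have hstep : ∀ g, g ∈ Z → ⁅g, a⁆ ∈ Z := by
    intro g hg
    obtain ⟨hgH, hgC⟩ := hg
    have hcomm : ⁅g, a⁆ = g * (a * g⁻¹ * a⁻¹) := by group
    refine Subgroup.mem_inf.mpr ⟨?_, ?_⟩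
    · rw [hcomm]
      exact mul_mem hgH (hNorm.conj_mem _ (inv_mem hgH) a)
    · refine Subgroup.mem_centralizer_iff.mpr ?_
      intro h hh
      have hh' : a⁻¹ * h * a ∈ H := by
        have := hNorm.conj_mem h hh a⁻¹
        rwa [inv_inv] at this
      have key : (a⁻¹ * h * a) * g⁻¹ = g⁻¹ * (a⁻¹ * h * a) :=
        (show Commute (a⁻¹ * h * a) g from hgC _ hh').inv_right
      have hg1 : h * g = g * h := hgC h hh
      have : h * (g * a * g⁻¹ * a⁻¹) = (g * a * g⁻¹ * a⁻¹) * h := by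
        calc h * (g * a * g⁻¹ * a⁻¹) = (h * g) * (a * g⁻¹ * a⁻¹) := by group
          _ = (g * h) * (a * g⁻¹ * a⁻¹) := by rw [hg1]
          _ = g * a * (((a⁻¹ * h * a) * g⁻¹) * a⁻¹) := by group
          _ = g * a * ((g⁻¹ * (a⁻¹ * h * a)) * a⁻¹) := by rw [key]
          _ = (g * a * g⁻¹ * a⁻¹) * h := by group
      have hc2 : ⁅g, a⁆ = g * a * g⁻¹ * a⁻¹ := by group
      rw [hc2]
      exact this
  constructor
  · -- Part 1: Z ∩ C(a) ≤ center
    intro z hz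
    obtain ⟨⟨hzH, hzC⟩, hza⟩ := hz
    rw [Subgroup.mem_center_iff]
    have htop : (⊤ : Subgroup G) ≤ Subgroup.centralizer {z} := by
      rw [← hgen]
      apply sup_le
      · intro h hh
        rw [Subgroup.mem_centralizer_iff]
        intro m hm
        rw [Set.mem_singleton_iff] at hm
        subst hm
        exact (hzC h hh).symm
      · rw [Subgroup.closure_le]
        intro x hx
        rw [Set.mem_singleton_iff] at hx
        rw [hx, SetLike.mem_coe]
        refine Subgroup.mem_centralizer_iff.mpr ?_
        intro m hm
        rw [Set.mem_singleton_iff] at hm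
        rw [hm]
        exact (Subgroup.mem_centralizer_iff.mp hza a rfl).symm
    intro g
    have := htop (Subgroup.mem_top g)
    rw [Subgroup.mem_centralizer_iff] at this
    exact (this z rfl).symm
  · -- Part 2: nontrivial
    rw [Subgroup.ne_bot_iff_exists_ne_one] at hZ ⊢
    obtain ⟨⟨z, hzZ⟩, hzne⟩ := hZ
    have hzne' : z ≠ 1 := by simpa [Subtype.ext_iff] using hzne
    have hmem : ∀ n, engel a z n ∈ Z := by
      intro n
      induction n with
      | zero => exact hzZ
      | succ n ih => exact hstep _ ih
    have hex : ∃ n, engel a z n = 1 := hEngel z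
    classical
    set n := Nat.find hex with hn
    have hn1 : engel a z n = 1 := Nat.find_spec hex
    have hn0 : n ≠ 0 := by
      intro h0
      apply hzne'
      have := hn1
      rw [h0] at this
      exact this
    obtain ⟨m, hm⟩ : ∃ m, n = m + 1 := Nat.exists_eq_succ_of_ne_zero hn0
    have hwne : engel a z m ≠ 1 := Nat.find_min hex (by omega)
    have hwc : ⁅engel a z m, a⁆ = 1 := by
      have := hn1
      rw [hm] at this
      exact this
    refine ⟨⟨engel a z m, Subgroup.mem_inf.mpr ⟨hmem m, ?_⟩⟩, ?_⟩
    · refine Subgroup.mem_centralizer_iff.mpr ?_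
      intro x hx
      rw [Set.mem_singleton_iff] at hx
      rw [hx]
      have h2 : engel a z m * a = a * engel a z m :=
        commutatorElement_eq_one_iff_mul_comm.mp hwc
      exact h2.symm
    · simpa [Subtype.ext_iff] using hwne
end

section
/- Let G be a group and a ∈ G an almost Engel element whose minimal Engel sink E(a) is finite and contained in a locally nilpotent subgroup of G. Then the subgroup ⟨E(a)⟩ generated by E(a) is finite. -/
open scoped commutatorElement

section Aux

open Subgroup

universe u

private lemma lcs_map_eq {G G' : Type u} [Group G] [Group G'] (f : G →* G')
    (hf : Function.Surjective f) (n : ℕ) :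
    (Subgroup.lowerCentralSeries (⊤ : Subgroup G) n).map f = Subgroup.lowerCentralSeries (⊤ : Subgroup G') n := by
  induction n with
  | zero => exact Subgroup.map_top_of_surjective f hf
  | succ n ih =>
    show Subgroup.map f ⁅Subgroup.lowerCentralSeries (⊤ : Subgroup G) n, ⊤⁆ = ⁅Subgroup.lowerCentralSeries (⊤ : Subgroup G') n, ⊤⁆
    rw [Subgroup.map_commutator, ih, Subgroup.map_top_of_surjective f hf]

private lemma conj_central {H : Type u} [Group H] {z : H} (hz : ∀ w, z * w = w * z) (x y : H) :
    (x * z) * y * (x * z)⁻¹ = x * y * x⁻¹ := by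
  rw [mul_inv_rev]
  calc x * z * y * (z⁻¹ * x⁻¹) = x * (z * y * z⁻¹) * x⁻¹ := by
        simp [mul_assoc]
    _ = x * y * x⁻¹ := by rw [hz y, mul_inv_cancel_right]

private lemma comm_central_left_s12 {H : Type u} [Group H] {z : H} (hz : ∀ w, z * w = w * z)
    (x y : H) : ⁅x * z, y⁆ = ⁅x, y⁆ := by
  rw [commutatorElement_def, commutatorElement_def, conj_central hz]

private lemma comm_central_right_s12 {H : Type u} [Group H] {z : H} (hz : ∀ w, z * w = w * z)
    (x y : H) : ⁅x, y * z⁆ = ⁅x, y⁆ :=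
  calc ⁅x, y * z⁆ = ⁅y * z, x⁆⁻¹ := (commutatorElement_inv _ _).symm
    _ = ⁅y, x⁆⁻¹ := by rw [comm_central_left_s12 hz]
    _ = ⁅x, y⁆ := commutatorElement_inv _ _

/-- The abelian case of the key induction. -/
private lemma key_abelian {H : Type u} [Group H] (hcomm : ∀ x y : H, x * y = y * x)
    (ψ : H →* H) (E : Set H) (hEf : E.Finite)
    (hgen : Subgroup.closure E = ⊤)
    (hperm : (fun x : H => x * (ψ x)⁻¹) '' E = E)
    (hsink : ∀ x : H, ∃ N, ∀ n ≥ N, (fun x : H => x * (ψ x)⁻¹)^[n] x ∈ E) :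
    Finite H := by
  letI : CommGroup H := { (inferInstance : Group H) with mul_comm := hcomm }
  let W : H →* H :=
    { toFun := fun x => x * (ψ x)⁻¹
      map_one' := by simp
      map_mul' := fun x y => by
        simp only [map_mul, mul_inv]
        exact mul_mul_mul_comm x y (ψ x)⁻¹ (ψ y)⁻¹ }
  have hWrange : W.range = ⊤ := by
    rw [MonoidHom.range_eq_map, ← hgen, MonoidHom.map_closure]
    have : ⇑W '' E = E := hperm
    rw [this]
  have hWsurj : Function.Surjective W := MonoidHom.range_eq_top.mp hWrange
  have hFG : Group.FG H := ⟨⟨hEf.toFinset, by rw [Set.Finite.coe_toFinset]; exact hgen⟩⟩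
  haveI : AddGroup.FG (Additive H) := GroupFG.iff_add_fg.mp hFG
  haveI : Module.Finite ℤ (Additive H) := Module.Finite.iff_addGroup_fg.mpr ‹_›
  have hWinj : Function.Injective W := by
    have := IsNoetherian.injective_of_surjective_endomorphism
      ((MonoidHom.toAdditive W).toIntLinearMap) hWsurj
    exact this
  have hpre : ∀ x : H, W x ∈ E → x ∈ E := by
    intro x hx
    have hx' : W x ∈ ⇑W '' E := by rw [show ⇑W '' E = E from hperm]; exact hx
    obtain ⟨e, heE, he⟩ := hx'
    rwa [← hWinj he]
  have hiter : ∀ n (x : H), (⇑W)^[n] x ∈ E → x ∈ E := by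
    intro n
    induction n with
    | zero => intro x hx; simpa using hx
    | succ n ih =>
      intro x hx
      rw [Function.iterate_succ_apply] at hx
      exact hpre x (ih _ hx)
  have hall : ∀ x : H, x ∈ E := by
    intro x
    obtain ⟨N, hN⟩ := hsink x
    exact hiter N x (hN N le_rfl)
  exact Set.finite_univ_iff.mp (hEf.subset fun x _ => hall x)

/-- Key induction on the nilpotency class. -/
private lemma key (c : ℕ) : ∀ (H : Type u) [Group H], ∀ (ψ : H →* H) (E : Set H),
    Subgroup.lowerCentralSeries (⊤ : Subgroup H) c = ⊥ → E.Finite → Subgroup.closure E = ⊤ →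
    ((fun x : H => x * (ψ x)⁻¹) '' E = E) →
    (∀ x : H, ∃ N, ∀ n ≥ N, (fun x : H => x * (ψ x)⁻¹)^[n] x ∈ E) →
    Finite H := by
  induction c with
  | zero =>
    intro H _ ψ E hc _ _ _ _
    have : Subsingleton H := by
      constructor
      intro x y
      have hx : x ∈ (⊥ : Subgroup H) := hc ▸ Subgroup.mem_top x
      have hy : y ∈ (⊥ : Subgroup H) := hc ▸ Subgroup.mem_top y
      rw [Subgroup.mem_bot] at hx hy
      rw [hx, hy]
    exact Finite.of_subsingleton
  | succ c ih =>
    intro H _ ψ E hc hEf hgen hperm hsink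
    rcases Nat.eq_zero_or_pos c with rfl | hcpos
    · refine key_abelian ?_ ψ E hEf hgen hperm hsink
      intro x y
      have h1 : ⁅x, y⁆ ∈ Subgroup.lowerCentralSeries (⊤ : Subgroup H) 1 :=
        Subgroup.commutator_mem_commutator (Subgroup.mem_top x) (Subgroup.mem_top y)
      rw [hc] at h1
      exact commutatorElement_eq_one_iff_mul_comm.mp (Subgroup.mem_bot.mp h1)
    · set K := Subgroup.lowerCentralSeries (⊤ : Subgroup H) c with hK
      have hKcen : ∀ z ∈ K, ∀ w : H, z * w = w * z := by
        intro z hz w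
        have h1 : ⁅z, w⁆ ∈ Subgroup.lowerCentralSeries (⊤ : Subgroup H) (c + 1) :=
          Subgroup.commutator_mem_commutator hz (Subgroup.mem_top w)
        rw [hc] at h1
        exact commutatorElement_eq_one_iff_mul_comm.mp (Subgroup.mem_bot.mp h1)
      have hψK : K ≤ Subgroup.comap ψ K := by
        intro x hx
        exact Subgroup.mem_comap.mpr (lowerCentralSeries.map ψ c (Subgroup.mem_map_of_mem ψ hx))
      set π : H →* H ⧸ K := QuotientGroup.mk' K with hπ
      have hπs : Function.Surjective π := QuotientGroup.mk'_surjective K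
      set ψ' : H ⧸ K →* H ⧸ K := QuotientGroup.map K K ψ hψK with hψ'
      have hcomm' : ∀ x : H, π (x * (ψ x)⁻¹) = π x * (ψ' (π x))⁻¹ := by
        intro x
        simp [hπ, hψ', QuotientGroup.map_mk']
      haveI hQfin : Finite (H ⧸ K) := by
        apply ih (H ⧸ K) ψ' (π '' E)
        · rw [← lcs_map_eq π hπs c, ← hK]
          rw [Subgroup.map_eq_bot_iff, hπ, QuotientGroup.ker_mk']
        · exact hEf.image π
        · rw [← MonoidHom.map_closure, hgen, Subgroup.map_top_of_surjective π hπs]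
        · have himg : (fun x : H ⧸ K => x * (ψ' x)⁻¹) '' (⇑π '' E)
              = ⇑π '' ((fun x : H => x * (ψ x)⁻¹) '' E) := by
            rw [Set.image_image, Set.image_image]
            exact Set.image_congr' fun x => (hcomm' x).symm
          rw [himg, hperm]
        · intro x'
          obtain ⟨x, rfl⟩ := hπs x'
          obtain ⟨N, hN⟩ := hsink x
          refine ⟨N, fun n hn => ?_⟩
          have hsem : ∀ (n : ℕ) (y : H),
              (fun x : H ⧸ K => x * (ψ' x)⁻¹)^[n] (π y) = π ((fun x : H => x * (ψ x)⁻¹)^[n] y) := by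
            intro n
            induction n with
            | zero => intro y; rfl
            | succ n ihn =>
              intro y
              rw [Function.iterate_succ_apply, Function.iterate_succ_apply, ← hcomm' y, ihn]
          rw [hsem]
          exact Set.mem_image_of_mem π (hN n hn)
      haveI hcsF : Finite (commutatorSet H) := by
        have hsub : commutatorSet H ⊆
            (fun p : (H ⧸ K) × (H ⧸ K) => ⁅p.1.out, p.2.out⁆) '' Set.univ := by
          rintro _ ⟨g₁, g₂, rfl⟩
          refine ⟨(π g₁, π g₂), Set.mem_univ _, ?_⟩
          have h1 : g₁⁻¹ * (π g₁ : H ⧸ K).out ∈ K :=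
            QuotientGroup.eq.mp (QuotientGroup.out_eq' (π g₁)).symm
          have h2 : g₂⁻¹ * (π g₂ : H ⧸ K).out ∈ K :=
            QuotientGroup.eq.mp (QuotientGroup.out_eq' (π g₂)).symm
          have e1 : (π g₁ : H ⧸ K).out = g₁ * (g₁⁻¹ * (π g₁ : H ⧸ K).out) := by
            rw [mul_inv_cancel_left]
          have e2 : (π g₂ : H ⧸ K).out = g₂ * (g₂⁻¹ * (π g₂ : H ⧸ K).out) := by
            rw [mul_inv_cancel_left]
          simp only
          rw [e1, e2, comm_central_left_s12 (hKcen _ h1), comm_central_right_s12 (hKcen _ h2)]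
        exact Set.Finite.to_subtype ((Set.finite_univ.image _).subset hsub)
      haveI hcF : Finite (_root_.commutator H) := inferInstance
      have hKle : K ≤ _root_.commutator H := by
        have h1 : Subgroup.lowerCentralSeries (⊤ : Subgroup H) c ≤ Subgroup.lowerCentralSeries (⊤ : Subgroup H) 1 :=
          Subgroup.lowerCentralSeries_antitone (S := ⊤) hcpos
        exact h1
      haveI : Finite K := by
        have h1 : ((_root_.commutator H : Subgroup H) : Set H).Finite := Set.toFinite _
        exact Set.Finite.to_subtype (h1.subset hKle)
      exact Finite.of_subgroup_quotient (H := K)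

end Aux

theorem stmt_12 {G : Type*} [Group G] (a : G) (E : Set G)
    (hE : IsSink a E) (hmin : ∀ T : Set G, IsSink a T → E ⊆ T)
    (L : Subgroup G)
    (hLnil : ∀ S : Finset G, (S : Set G) ⊆ (L : Set G) →
      Group.IsNilpotent ↥(Subgroup.closure (S : Set G)))
    (hEL : E ⊆ (L : Set G)) :
    ((Subgroup.closure E : Subgroup G) : Set G).Finite := by
  classical
  obtain ⟨hEfin, hEsink⟩ := hE
  set f : G → G := fun x => ⁅x, a⁆ with hf
  -- engel iterates of f
  have hengel : ∀ (x : G) (n : ℕ), engel a x n = f^[n] x := by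
    intro x n
    induction n with
    | zero => rfl
    | succ n ihn => rw [Function.iterate_succ_apply', ← ihn]; rfl
  -- the image f '' E equals E
  have hfE : f '' E = E := by
    have hTsink : IsSink a (f '' E) := by
      refine ⟨hEfin.image f, fun x => ?_⟩
      obtain ⟨N, hN⟩ := hEsink x
      refine ⟨N + 1, fun n hn => ?_⟩
      obtain ⟨m, rfl⟩ : ∃ m, n = m + 1 := ⟨n - 1, by omega⟩
      have : engel a x (m + 1) = f (engel a x m) := rfl
      rw [this]
      exact Set.mem_image_of_mem f (hN m (by omega))
    have hsub : E ⊆ f '' E := hmin _ hTsink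
    exact (Set.eq_of_subset_of_ncard_le hsub (Set.ncard_image_le hEfin) (hEfin.image f)).symm
  set H : Subgroup G := Subgroup.closure E with hH
  -- conjugation by a maps H into H
  have hconj : ∀ x ∈ H, a * x * a⁻¹ ∈ H := by
    have hconjE : ∀ s ∈ E, a * s * a⁻¹ ∈ H := by
      intro s hs
      have h1 : ⁅s, a⁆ ∈ E := by rw [← hfE]; exact Set.mem_image_of_mem f hs
      have h2 : s⁻¹ * ⁅s, a⁆ ∈ H := by
        exact mul_mem (inv_mem (Subgroup.subset_closure hs)) (Subgroup.subset_closure h1)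
      have h3 : s⁻¹ * ⁅s, a⁆ = a * s⁻¹ * a⁻¹ := by
        rw [commutatorElement_def]; group
      rw [h3] at h2
      have := inv_mem h2
      simpa [mul_assoc] using this
    intro x hx
    have : Subgroup.map (MulAut.conj a).toMonoidHom H ≤ H := by
      rw [hH, MonoidHom.map_closure]
      apply Subgroup.closure_le (K := H) |>.mpr
      rintro _ ⟨s, hs, rfl⟩
      simpa [MulAut.conj] using hconjE s hs
    exact this (Subgroup.mem_map_of_mem _ hx)
  -- transport everything to ↥H
  let ψ : ↥H →* ↥H :=
    { toFun := fun x => ⟨a * ↑x * a⁻¹, hconj ↑x x.2⟩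
      map_one' := by ext; simp
      map_mul' := fun x y => by ext; simp }
  have hcoe_w : ∀ x : ↥H, ((x * (ψ x)⁻¹ : ↥H) : G) = f ↑x := by
    intro x
    show (↑x * (a * ↑x * a⁻¹)⁻¹ : G) = ⁅(x : G), a⁆
    rw [commutatorElement_def]; group
  set E' : Set ↥H := Subtype.val ⁻¹' E with hE'
  have hE'fin : E'.Finite := hEfin.preimage (Subtype.val_injective.injOn)
  have hE'gen : Subgroup.closure E' = ⊤ := Subgroup.closure_closure_coe_preimage
  have hE'perm : (fun x : ↥H => x * (ψ x)⁻¹) '' E' = E' := by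
    have hsub : E' ⊆ (fun x : ↥H => x * (ψ x)⁻¹) '' E' := by
      intro e he
      have : (e : G) ∈ f '' E := by rw [hfE]; exact he
      obtain ⟨s, hs, hse⟩ := this
      have hsH : s ∈ H := Subgroup.subset_closure hs
      refine ⟨⟨s, hsH⟩, hs, ?_⟩
      apply Subtype.ext
      rw [hcoe_w]
      exact hse
    exact (Set.eq_of_subset_of_ncard_le hsub (Set.ncard_image_le hE'fin) (hE'fin.image _)).symm
  have hE'sink : ∀ x : ↥H, ∃ N, ∀ n ≥ N, (fun x : ↥H => x * (ψ x)⁻¹)^[n] x ∈ E' := by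
    intro x
    obtain ⟨N, hN⟩ := hEsink ↑x
    refine ⟨N, fun n hn => ?_⟩
    have hiter : ∀ (n : ℕ) (y : ↥H), (((fun x : ↥H => x * (ψ x)⁻¹)^[n] y : ↥H) : G) = f^[n] ↑y := by
      intro n
      induction n with
      | zero => intro y; rfl
      | succ n ihn =>
        intro y
        rw [Function.iterate_succ_apply, Function.iterate_succ_apply, ihn, hcoe_w]
    show ((((fun x : ↥H => x * (ψ x)⁻¹)^[n] x : ↥H) : G)) ∈ E
    rw [hiter, ← hengel]
    exact hN n hn
  -- nilpotency of H
  have hnil : Group.IsNilpotent ↥H := by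
    have h1 := hLnil hEfin.toFinset (by rw [Set.Finite.coe_toFinset]; exact hEL)
    rw [hEfin.coe_toFinset] at h1
    exact h1
  obtain ⟨c, hc⟩ := nilpotent_iff_lowerCentralSeries.mp hnil
  haveI : Finite ↥H := key c ↥H ψ E' hc hE'fin hE'gen hE'perm hE'sink
  exact Set.toFinite _
end

section
/- Let D be an abelian group, a an element of a group G containing D with D normalized by a, such that D = [D, a] (D is generated by, and equals, the set of commutators it generates, with [D,a] = D as subgroups). If a is almost Engel on D with minimal sink E(a) and D = ⟨E(a)⟩ with D abelian and D = [D,a], then D = E(a) as sets and hence D is finite. -/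
open scoped commutatorElement

/-- A finite set `S` is a sink-candidate for `a` restricted to a set `K`. -/
def IsSinkOn {G : Type*} [Group G] (a : G) (K : Set G) (S : Set G) : Prop :=
  S.Finite ∧ ∀ x ∈ K, ∃ N : ℕ, ∀ n ≥ N, engel a x n ∈ S

theorem stmt_13 {G : Type*} [Group G] (D : Subgroup G) (hD : IsMulCommutative D) (a : G)
    (E : Set G)
    (hE : IsSinkOn a (D : Set G) E)
    (hmin : ∀ T : Set G, IsSinkOn a (D : Set G) T → E ⊆ T)
    (hgenE : Subgroup.closure E = D)
    (hcomm : Subgroup.closure {x : G | ∃ d ∈ D, x = ⁅d, a⁆} = D) :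
    E = (D : Set G) ∧ ((D : Subgroup G) : Set G).Finite := by
  haveI := hD
  letI : CommGroup D := { (inferInstance : Group D) with mul_comm := mul_comm' }
  have hmemc : ∀ d ∈ D, ⁅d, a⁆ ∈ D := fun d hd => by
    rw [← hcomm]; exact Subgroup.subset_closure ⟨d, hd, rfl⟩
  have hengel_mem : ∀ x ∈ D, ∀ n, engel a x n ∈ D := by
    intro x hx n
    induction n with
    | zero => exact hx
    | succ n ih => exact hmemc _ ih
  have hc1 : ∀ x y, x ∈ D → y ∈ D → x * y = y * x := fun x y hx hy =>
    Subtype.ext_iff.mp (mul_comm (⟨x, hx⟩ : D) ⟨y, hy⟩)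
  set ψ : D →* D :=
    { toFun := fun d => ⟨⁅(d : G), a⁆, hmemc d d.2⟩
      map_one' := by ext; simp
      map_mul' := by
        intro d e
        ext
        show ⁅(d : G) * e, a⁆ = ⁅(d : G), a⁆ * ⁅(e : G), a⁆
        have key : ⁅(d : G) * e, a⁆ = (d : G) * ⁅(e : G), a⁆ * (d : G)⁻¹ * ⁅(d : G), a⁆ := by
          simp only [commutatorElement_def]; group
        rw [key, hc1 _ _ d.2 (hmemc _ e.2), mul_inv_cancel_right,
          hc1 _ _ (hmemc _ e.2) (hmemc _ d.2)] } with hψ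
  have hψcoe : ∀ d : D, ((ψ d : D) : G) = ⁅(d : G), a⁆ := fun d => rfl
  -- surjectivity
  have hsurj : Function.Surjective ψ := by
    intro x
    have hle : Subgroup.closure {y : G | ∃ d ∈ D, y = ⁅d, a⁆} ≤ ψ.range.map D.subtype := by
      apply Subgroup.closure_le _ |>.mpr
      rintro y ⟨d, hd, rfl⟩
      exact ⟨ψ ⟨d, hd⟩, ⟨⟨d, hd⟩, rfl⟩, rfl⟩
    have hx : (x : G) ∈ ψ.range.map D.subtype := hle (by rw [hcomm]; exact x.2)
    obtain ⟨y, ⟨z, hz⟩, hyx⟩ := hx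
    exact ⟨z, hz.trans (Subtype.ext hyx)⟩
  -- injectivity via Hopficity of f.g. abelian groups
  haveI hfg : Group.FG D := (Group.fg_iff_subgroup_fg D).mpr
    ((Subgroup.fg_iff D).mpr ⟨E, hgenE, hE.1⟩)
  haveI : AddGroup.FG (Additive D) := GroupFG.iff_add_fg.mp hfg
  haveI : Module.Finite ℤ (Additive D) := Module.Finite.iff_addGroup_fg.mpr ‹_›
  have hinj : Function.Injective ψ := by
    have := IsNoetherian.injective_of_surjective_endomorphism
      (R := ℤ) (M := Additive D) (MonoidHom.toAdditive ψ).toIntLinearMap hsurj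
    exact this
  -- iterates of ψ compute engel values
  have hiter : ∀ (x : D) (n : ℕ), ((ψ^[n] x : D) : G) = engel a (x : G) n := by
    intro x n
    induction n with
    | zero => rfl
    | succ n ih =>
      rw [Function.iterate_succ_apply', hψcoe, ih]
      rfl
  -- E ⊆ D by minimality
  have hED : E ⊆ (D : Set G) := by
    refine (hmin (E ∩ D) ⟨hE.1.subset Set.inter_subset_left, fun x hx => ?_⟩).trans
      Set.inter_subset_right
    obtain ⟨N, hN⟩ := hE.2 x hx
    exact ⟨N, fun n hn => ⟨hN n hn, hengel_mem x hx n⟩⟩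
  -- D ⊆ E by injectivity + pigeonhole
  have hDE : ∀ x : D, (x : G) ∈ E := by
    intro x
    obtain ⟨N, hN⟩ := hE.2 x x.2
    have hmap : Set.MapsTo (fun n : ℕ => ψ^[N + n] x) Set.univ (Subtype.val ⁻¹' E) := by
      intro n _
      simp only [Set.mem_preimage]
      rw [hiter]
      exact hN _ (Nat.le_add_right N n)
    obtain ⟨m, -, n, -, hmn, heq⟩ :=
      Set.infinite_univ.exists_ne_map_eq_of_mapsTo hmap (hE.1.preimage Subtype.val_injective.injOn)
    wlog hlt : m < n generalizing m n
    · exact this n m hmn.symm heq.symm (by omega)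
    have hkey : ψ^[N + m] (ψ^[n - m] x) = ψ^[N + m] x := by
      rw [← Function.iterate_add_apply]
      rw [show N + m + (n - m) = N + n by omega]
      exact heq.symm
    have hfix : ψ^[n - m] x = x := Function.Injective.iterate hinj (N + m) hkey
    have hper : ∀ t : ℕ, ψ^[(n - m) * t] x = x := by
      intro t
      rw [Function.iterate_mul]
      exact Function.iterate_fixed hfix t
    have : engel a (x : G) ((n - m) * N) = (x : G) := by rw [← hiter, hper]
    have hge : (n - m) * N ≥ N := Nat.le_mul_of_pos_left N (by omega)
    rw [← this]
    exact hN _ hge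
  have hEeq : E = (D : Set G) :=
    Set.Subset.antisymm hED (fun x hx => hDE ⟨x, hx⟩)
  exact ⟨hEeq, hEeq ▸ hE.1⟩
end
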